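/- If the operator I − G is a bijection of X together with all the operators I − G_i, then the block operator matrix L is a bijection of X^n, and the components of its inverse are given explicitly by ω_{ij} = (I − G_i)δ_{ij} + G_i (I − Γ)(I − G_j), where Γ is defined by I − Γ = (I − G)^{−1}; that is, the map ψ ↦ (Σ_j ω_{ij} ψ_j)_{i=1}^n is a two-sided inverse of L. -/

import Mathlib

/-- If `I - G` is a bijection of `X` together with all the operators
`I - G i`, then the block operator matrix `L` is a bijection of `Xⁿ`, and the components
of its inverse are `ω i j = (I - G i) δ_{ij} + G i (I - Γ)(I - G j)`, where `Γ` is defined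
by `I - Γ = (I - G)⁻¹`; that is, `ψ ↦ (∑ j, ω i j (ψ j))ᵢ` is a two-sided inverse of `L`. -/

theorem stmt_4 {X : Type*} [AddCommGroup X] [Module ℂ X] (n : ℕ) (hn : 1 ≤ n)
    (G Γ : Fin n → Module.End ℂ X)
    (hΓ : ∀ i, (1 - G i) * (1 - Γ i) = 1 ∧ (1 - Γ i) * (1 - G i) = 1)
    (hG : Function.Bijective ⇑(1 - ∑ i, G i : Module.End ℂ X))
    (Γtot : Module.End ℂ X)
    (hΓtot₁ : (1 - ∑ i, G i) * (1 - Γtot) = 1)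
    (hΓtot₂ : (1 - Γtot) * (1 - ∑ i, G i) = 1) :
    Function.Bijective (fun φ : Fin n → X =>
      fun i => φ i + Γ i (∑ k ∈ Finset.univ.erase i, φ k))
    ∧ (∀ ψ : Fin n → X, (fun i => (fun φ : Fin n → X =>
          fun i => φ i + Γ i (∑ k ∈ Finset.univ.erase i, φ k))
            (fun j => ∑ k, ((if j = k then (1 - G j) else 0)
              + G j * (1 - Γtot) * (1 - G k)) (ψ k)) i) = ψ)
    ∧ (∀ φ : Fin n → X, (fun i => ∑ k, ((if i = k then (1 - G i) else 0)
          + G i * (1 - Γtot) * (1 - G k))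
            ((fun j => φ j + Γ j (∑ l ∈ Finset.univ.erase j, φ l)) k)) = φ) := by
  -- operator identities
  have e2 : ∀ i, Γ i * (1 - G i) = -(G i) := by
    intro i
    have h := (hΓ i).2
    have key : Γ i * (1 - G i) = (1 - G i) - (1 - Γ i) * (1 - G i) := by noncomm_ring
    rw [key, h]; noncomm_ring
  have e3 : ∀ i, (1 - G i) * Γ i = -(G i) := by
    intro i
    have h := (hΓ i).1
    have key : (1 - G i) * Γ i = (1 - G i) - (1 - G i) * (1 - Γ i) := by noncomm_ring
    rw [key, h]; noncomm_ring
  have e4 : (∑ i, G i) * (1 - Γtot) = -Γtot := by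
    have key : (∑ i, G i) * (1 - Γtot) = (1 - Γtot) - (1 - ∑ i, G i) * (1 - Γtot) := by
      noncomm_ring
    rw [key, hΓtot₁]; noncomm_ring
  -- pointwise versions
  have p2 : ∀ i (x : X), Γ i (x - G i x) = -(G i x) := by
    intro i x
    have := congrArg (fun f : Module.End ℂ X => f x) (e2 i)
    simpa using this
  have p3 : ∀ i (x : X), Γ i x - G i (Γ i x) = -(G i x) := by
    intro i x
    have := congrArg (fun f : Module.End ℂ X => f x) (e3 i)
    simpa using this
  have ptot : ∀ x : X, (1 - Γtot) ((1 - ∑ i, G i) x) = x := by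
    intro x
    have := congrArg (fun f : Module.End ℂ X => f x) hΓtot₂
    simpa using this
  -- split the ω-sum
  have hsplit : ∀ (ψ : Fin n → X) (j : Fin n),
      (∑ k, ((if j = k then (1 - G j) else 0)
        + G j * (1 - Γtot) * (1 - G k)) (ψ k))
      = (ψ j - G j (ψ j)) + G j ((1 - Γtot) (∑ k, (ψ k - G k (ψ k)))) := by
    intro ψ j
    simp only [LinearMap.add_apply]
    rw [Finset.sum_add_distrib]
    congr 1
    · have : ∀ k : Fin n, ((if j = k then (1 - G j) else 0) : Module.End ℂ X) (ψ k)
          = if j = k then (1 - G j) (ψ k) else 0 := by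
        intro k; split <;> simp
      rw [Finset.sum_congr rfl fun k _ => this k, Finset.sum_ite_eq]
      simp
    · rw [show (∑ k, (G j * (1 - Γtot) * (1 - G k)) (ψ k))
          = ∑ k, G j ((1 - Γtot) (ψ k - G k (ψ k))) by
        refine Finset.sum_congr rfl fun k _ => ?_
        simp [Module.End.mul_apply]]
      rw [← map_sum, ← map_sum]
  have herase : ∀ (φ : Fin n → X) (k : Fin n),
      ∑ l ∈ Finset.univ.erase k, φ l = (∑ l, φ l) - φ k := by
    intro φ k
    rw [eq_sub_iff_add_eq, add_comm]
    exact Finset.add_sum_erase _ _ (Finset.mem_univ k)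
  -- right inverse: L ∘ Ω = id
  have hLR : ∀ ψ : Fin n → X, (fun i => (fun φ : Fin n → X =>
          fun i => φ i + Γ i (∑ k ∈ Finset.univ.erase i, φ k))
            (fun j => ∑ k, ((if j = k then (1 - G j) else 0)
              + G j * (1 - Γtot) * (1 - G k)) (ψ k)) i) = ψ := by
    intro ψ
    funext i
    simp only
    rw [herase]
    rw [Finset.sum_congr rfl fun k _ => hsplit ψ k, hsplit ψ i]
    set t : X := ∑ k, (ψ k - G k (ψ k)) with ht
    have hsum2 : (∑ k, G k ((1 - Γtot) t)) = -(Γtot t) := by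
      rw [show (∑ k, G k ((1 - Γtot) t)) = (∑ k, G k) ((1 - Γtot) t) from
        (LinearMap.sum_apply _ _ _).symm, ← Module.End.mul_apply, e4]
      simp
    rw [Finset.sum_add_distrib, ← ht, hsum2]
    have hv : (1 - Γtot) t = t - Γtot t := by simp
    rw [hv, show t + -Γtot t = t - Γtot t from by abel]
    generalize t - Γtot t = v
    have hx : v - (ψ i - G i (ψ i) + G i v) = (v - ψ i) - G i (v - ψ i) := by
      rw [map_sub]; abel
    rw [hx, p2 i (v - ψ i), map_sub]
    abel
  -- left inverse: Ω ∘ L = id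
  have hRL : ∀ φ : Fin n → X, (fun i => ∑ k, ((if i = k then (1 - G i) else 0)
          + G i * (1 - Γtot) * (1 - G k))
            ((fun j => φ j + Γ j (∑ l ∈ Finset.univ.erase j, φ l)) k)) = φ := by
    intro φ
    funext i
    simp only
    set s : X := ∑ l, φ l with hs
    rw [show (∑ k, ((if i = k then (1 - G i) else 0)
          + G i * (1 - Γtot) * (1 - G k))
            (φ k + Γ k (∑ l ∈ Finset.univ.erase k, φ l)))
        = ∑ k, ((if i = k then (1 - G i) else 0)
          + G i * (1 - Γtot) * (1 - G k)) (φ k + Γ k (s - φ k)) from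
      Finset.sum_congr rfl fun k _ => by rw [herase, ← hs]]
    rw [hsplit (fun k => φ k + Γ k (s - φ k)) i]
    have hkey : ∀ k : Fin n,
        (φ k + Γ k (s - φ k)) - G k (φ k + Γ k (s - φ k)) = φ k - G k s := by
      intro k
      have h1 := p3 k (s - φ k)
      have h2 : (φ k + Γ k (s - φ k)) - G k (φ k + Γ k (s - φ k))
          = (φ k - G k (φ k)) + (Γ k (s - φ k) - G k (Γ k (s - φ k))) := by
        rw [map_add]; abel
      rw [h2, h1, map_sub]; abel
    rw [Finset.sum_congr rfl fun k _ => hkey k]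
    have h3 : (∑ k, (φ k - G k s)) = (1 - ∑ k, G k) s := by
      rw [Finset.sum_sub_distrib, ← hs]
      simp [LinearMap.sum_apply]
    rw [h3, ptot, hkey i]
    abel
  refine ⟨Function.bijective_iff_has_inverse.mpr
    ⟨fun ψ => fun j => ∑ k, ((if j = k then (1 - G j) else 0)
        + G j * (1 - Γtot) * (1 - G k)) (ψ k), fun φ => hRL φ, fun ψ => hLR ψ⟩,
    hLR, hRL⟩
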